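/- Let f : E → ℝ be a twice continuously differentiable convex function on a finite-dimensional real inner-product space, with invertible Hessian H = f''(θ*) at a global minimizer θ*, and suppose that for all θ₁, θ₂ ∈ E and all z: e^{-S·d(θ₁,θ₂)} ⟨z, f''(θ₁) z⟩ ≤ ⟨z, f''(θ₂) z⟩ ≤ e^{S·d(θ₁,θ₂)} ⟨z, f''(θ₁) z⟩, where d(θ₁,θ₂) = √⟨θ₂-θ₁, H(θ₂-θ₁)⟩ and S ≥ 0. Then for all θ, with d = d(θ, θ*): f(θ) - f(θ*) ≤ (e^{Sd} - Sd - 1)/S². -/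

import Mathlib

open scoped RealInnerProductSpace

private lemma mono_aux (h H : ℝ → ℝ) (hd : ∀ t, HasDerivAt h (H t) t)
    (hH : ∀ t ∈ Set.Icc (0:ℝ) 1, 0 ≤ H t) : MonotoneOn h (Set.Icc 0 1) := by
  apply monotoneOn_of_deriv_nonneg (convex_Icc 0 1)
  · exact fun t _ => (hd t).differentiableAt.continuousAt.continuousWithinAt
  · exact fun t _ => (hd t).differentiableAt.differentiableWithinAt
  · intro t ht
    rw [interior_Icc] at ht
    rw [(hd t).deriv]
    exact hH t ⟨le_of_lt ht.1, le_of_lt ht.2⟩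

/-- Excess risk upper bound for generalized self-concordant functions: under the two-sided
Hessian comparison along segments (with weights given by `H = f''(θ*)`, `θ*` a global
minimizer with invertible Hessian), `f(θ) - f(θ*) ≤ (e^{Sd} - Sd - 1)/S²` where
`d = √⟨θ-θ*, H(θ-θ*)⟩`. -/
theorem excess_risk_self_concordant
    {E : Type*} [NormedAddCommGroup E] [InnerProductSpace ℝ E] [FiniteDimensional ℝ E]
    (f : E → ℝ) (g : E → E) (Hess : E → E →L[ℝ] E) (θs : E) (S : ℝ) (hS : 0 < S)
    (hconv : ConvexOn ℝ Set.univ f)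
    (hg : ∀ θ, HasGradientAt f (g θ) θ)
    (hHess : ∀ θ, HasFDerivAt g (Hess θ) θ)
    (hHessCont : Continuous Hess)
    (hmin : ∀ θ, f θs ≤ f θ)
    (hinv : Function.Bijective (Hess θs))
    (hcomp : ∀ θ₁ θ₂ z : E,
      Real.exp (-(S * Real.sqrt ⟪θ₂ - θ₁, Hess θs (θ₂ - θ₁)⟫)) * ⟪z, Hess θ₁ z⟫
          ≤ ⟪z, Hess θ₂ z⟫ ∧
        ⟪z, Hess θ₂ z⟫
          ≤ Real.exp (S * Real.sqrt ⟪θ₂ - θ₁, Hess θs (θ₂ - θ₁)⟫) * ⟪z, Hess θ₁ z⟫)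
    (θ : E) :
    f θ - f θs ≤ (Real.exp (S * Real.sqrt ⟪θ - θs, Hess θs (θ - θs)⟫)
        - S * Real.sqrt ⟪θ - θs, Hess θs (θ - θs)⟫ - 1) / S ^ 2 := by
  set v : E := θ - θs with hv
  set c : ℝ := ⟪v, Hess θs v⟫ with hc
  set d : ℝ := Real.sqrt c with hd
  set D : ℝ := S * d with hD
  -- gradient vanishes at the minimizer
  have hg0 : g θs = 0 := by
    have hloc : IsLocalMin f θs := Filter.Eventually.of_forall hmin
    have := hloc.hasFDerivAt_eq_zero (hg θs).hasFDerivAt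
    have h2 : InnerProductSpace.toDual ℝ E (g θs) = InnerProductSpace.toDual ℝ E 0 := by
      simpa using this
    exact (InnerProductSpace.toDual ℝ E).injective h2
  -- the path
  set γ : ℝ → E := fun t => θs + t • v with hγdef
  have hγ : ∀ t : ℝ, HasDerivAt γ v t := by
    intro t
    have h1 : HasDerivAt (fun t : ℝ => t • v) ((1:ℝ) • v) t := (hasDerivAt_id t).smul_const v
    simpa [hγdef] using h1.const_add θs
  have hγ0 : γ 0 = θs := by simp [hγdef]
  have hγ1 : γ 1 = θ := by simp [hγdef, hv]
  -- first derivative of f ∘ γ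
  have hφ' : ∀ t : ℝ, HasDerivAt (fun t => f (γ t)) (⟪g (γ t), v⟫) t := by
    intro t
    have := (hg (γ t)).hasFDerivAt.comp_hasDerivAt t (hγ t)
    simp [InnerProductSpace.toDual_apply_apply] at this
    exact this
  -- second derivative
  have hφ'' : ∀ t : ℝ, HasDerivAt (fun t => (⟪g (γ t), v⟫ : ℝ)) (⟪Hess (γ t) v, v⟫) t := by
    intro t
    have h1 : HasDerivAt (fun t => g (γ t)) (Hess (γ t) v) t :=
      (hHess (γ t)).comp_hasDerivAt t (hγ t)
    have h2 := (HasDerivAt.inner ℝ h1 (hasDerivAt_const t v))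
    simpa using h2
  -- exp comparison function and its derivatives
  have hA' : ∀ t : ℝ, HasDerivAt (fun t => (Real.exp (D * t) - D * t - 1) / S ^ 2)
      ((Real.exp (D * t) * D - D) / S ^ 2) t := by
    intro t
    have h1 : HasDerivAt (fun t : ℝ => D * t) D t := by
      simpa using (hasDerivAt_id t).const_mul D
    exact ((h1.exp.sub h1).sub_const 1).div_const (S ^ 2)
  have hA'' : ∀ t : ℝ, HasDerivAt (fun t => (Real.exp (D * t) * D - D) / S ^ 2)
      (Real.exp (D * t) * D * D / S ^ 2) t := by
    intro t
    have h1 : HasDerivAt (fun t : ℝ => D * t) D t := by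
      simpa using (hasDerivAt_id t).const_mul D
    have := ((h1.exp.mul_const D).sub_const D).div_const (S ^ 2)
    simpa [mul_comm, mul_assoc, mul_left_comm] using this
  have hd0 : 0 ≤ d := Real.sqrt_nonneg c
  have hcd : c ≤ d ^ 2 := by
    rcases le_or_gt 0 c with h | h
    · rw [hd, Real.sq_sqrt h]
    · nlinarith [sq_nonneg d]
  -- the key pointwise bound
  have hkey : ∀ t ∈ Set.Icc (0:ℝ) 1, ⟪Hess (γ t) v, v⟫ ≤ d ^ 2 * Real.exp (D * t) := by
    intro t ht
    have h1 := (hcomp θs (γ t) v).2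
    have h2 : γ t - θs = t • v := by simp [hγdef]
    have h3 : (⟪γ t - θs, Hess θs (γ t - θs)⟫ : ℝ) = t ^ 2 * c := by
      rw [h2, map_smul, real_inner_smul_left, real_inner_smul_right]
      ring
    have h4 : Real.sqrt (t ^ 2 * c) = t * d := by
      rw [Real.sqrt_mul (sq_nonneg t), Real.sqrt_sq ht.1, hd]
    rw [h3, h4] at h1
    have h5 : (⟪Hess (γ t) v, v⟫ : ℝ) = ⟪v, Hess (γ t) v⟫ := real_inner_comm _ _
    have h6 : Real.exp (S * (t * d)) * c ≤ d ^ 2 * Real.exp (D * t) := by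
      have he : Real.exp (S * (t * d)) = Real.exp (D * t) := by rw [hD]; ring_nf
      rw [he]
      have := Real.exp_pos (D * t)
      nlinarith
    calc (⟪Hess (γ t) v, v⟫ : ℝ) = ⟪v, Hess (γ t) v⟫ := h5
      _ ≤ Real.exp (S * (t * d)) * c := h1
      _ ≤ d ^ 2 * Real.exp (D * t) := h6
  -- F' := A' - φ' is monotone on [0,1]
  have hF'mono : MonotoneOn
      (fun t => (Real.exp (D * t) * D - D) / S ^ 2 - ⟪g (γ t), v⟫) (Set.Icc 0 1) := by
    apply mono_aux _ (fun t => Real.exp (D * t) * D * D / S ^ 2 - ⟪Hess (γ t) v, v⟫)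
      (fun t => (hA'' t).sub (hφ'' t))
    intro t ht
    have h1 := hkey t ht
    have h2 : Real.exp (D * t) * D * D / S ^ 2 = d ^ 2 * Real.exp (D * t) := by
      field_simp [hD]
      ring
    rw [h2]
    linarith
  have hF'0 : (Real.exp (D * 0) * D - D) / S ^ 2 - ⟪g (γ 0), v⟫ = 0 := by
    simp [hγ0, hg0]
  have hF'nonneg : ∀ t ∈ Set.Icc (0:ℝ) 1,
      0 ≤ (Real.exp (D * t) * D - D) / S ^ 2 - ⟪g (γ t), v⟫ := by
    intro t ht
    have := hF'mono (Set.left_mem_Icc.mpr zero_le_one) ht ht.1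
    linarith [hF'0, this]
  -- F := A - φ is monotone on [0,1]
  have hFmono : MonotoneOn
      (fun t => (Real.exp (D * t) - D * t - 1) / S ^ 2 - f (γ t)) (Set.Icc 0 1) := by
    apply mono_aux _ (fun t => (Real.exp (D * t) * D - D) / S ^ 2 - ⟪g (γ t), v⟫)
      (fun t => (hA' t).sub (hφ' t))
    exact hF'nonneg
  have hfin := hFmono (Set.left_mem_Icc.mpr zero_le_one)
      (Set.right_mem_Icc.mpr zero_le_one) zero_le_one
  simp only [mul_zero, mul_one, Real.exp_zero, hγ0, hγ1] at hfin
  have : (1 - 0 - 1) / S ^ 2 - f θs ≤ (Real.exp D - D - 1) / S ^ 2 - f θ := hfin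
  have hS2 : (0:ℝ) < S ^ 2 := by positivity
  rw [show (1 - 0 - 1 : ℝ) / S ^ 2 = 0 by ring] at this
  linarith
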